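/- Let D be a noncommutative alternative division ring in which 2 ≠ 0 (i.e., (1+1 : D) ≠ 0), and suppose f, g : D → D are additive maps satisfying f(x) + (x*x)*g(x⁻¹) = 0 for all nonzero x ∈ D. Then there exists a fixed element q ∈ D such that f(x) = x*q and g(x) = -(x*q) for all x ∈ D. -/

import Mathlib

/-- An alternative division ring: a unital non-associative ring satisfying the
left and right alternative laws, with `1 ≠ 0`, in which every nonzero element
has a two-sided inverse. -/
class AlternativeDivisionRing (D : Type*) extends NonAssocRing D, Inv D where
  one_ne_zero : (1 : D) ≠ 0
  alt_left : ∀ x y : D, (x * x) * y = x * (x * y)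
  alt_right : ∀ x y : D, (y * x) * x = y * (x * x)
  mul_inv_cancel : ∀ x : D, x ≠ 0 → x * x⁻¹ = 1
  inv_mul_cancel : ∀ x : D, x ≠ 0 → x⁻¹ * x = 1

namespace ADRAux

variable {D : Type*} [AlternativeDivisionRing D]

def asc (a b c : D) : D := a * b * c - a * (b * c)

lemma altL (a c : D) : asc a a c = 0 := by
  simp [asc, AlternativeDivisionRing.alt_left]

lemma altR (a c : D) : asc a c c = 0 := by
  have h := AlternativeDivisionRing.alt_right c a
  simp [asc, h]

lemma asc_add1 (a a' b c : D) : asc (a + a') b c = asc a b c + asc a' b c := by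
  simp only [asc, add_mul]; abel

lemma asc_add2 (a b b' c : D) : asc a (b + b') c = asc a b c + asc a b' c := by
  simp only [asc, add_mul, mul_add]; abel

lemma asc_add3 (a b c c' : D) : asc a b (c + c') = asc a b c + asc a b c' := by
  simp only [asc, mul_add]; abel

lemma asc_sub2 (a b b' c : D) : asc a (b - b') c = asc a b c - asc a b' c := by
  simp only [asc, sub_mul, mul_sub]; abel

lemma asc_sub1 (a a' b c : D) : asc (a - a') b c = asc a b c - asc a' b c := by
  simp only [asc, sub_mul, mul_sub]; abel

lemma asc_swap12 (a b c : D) : asc b a c = -asc a b c := by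
  have h : asc (a + b) (a + b) c = 0 := altL _ _
  rw [asc_add1, asc_add2, asc_add2, altL, altL, zero_add, add_zero] at h
  exact eq_neg_of_add_eq_zero_right h

lemma asc_swap23 (a b c : D) : asc a c b = -asc a b c := by
  have h : asc a (b + c) (b + c) = 0 := altR _ _
  rw [asc_add2, asc_add3, asc_add3, altR, altR, zero_add, add_zero] at h
  exact eq_neg_of_add_eq_zero_right h

lemma asc_cyc (a b c : D) : asc a b c = asc b c a := by
  rw [asc_swap23 b a c, asc_swap12 a b c, neg_neg]

lemma asc_swap13 (a b c : D) : asc c b a = -asc a b c := by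
  rw [asc_cyc c b a, asc_swap12 a b c]

lemma flex (a b : D) : asc a b a = 0 := by
  rw [asc_swap23 a a b, altL, neg_zero]

lemma asc_one1 (b c : D) : asc 1 b c = 0 := by simp [asc]
lemma asc_one2 (b c : D) : asc b 1 c = 0 := by simp [asc]
lemma asc_one3 (b c : D) : asc b c 1 = 0 := by simp [asc]

lemma teich (a b c d : D) :
    asc (a * b) c d - asc a (b * c) d + asc a b (c * d)
      = a * asc b c d + asc a b c * d := by
  simp only [asc, mul_sub, sub_mul, mul_add, add_mul]; abel


lemma two_imp (h2 : (1 : D) + 1 ≠ 0) {t : D} (h : t + t = 0) : t = 0 := by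
  by_contra hne
  apply h2
  have h1 := AlternativeDivisionRing.mul_inv_cancel t hne
  calc (1 : D) + 1 = t * t⁻¹ + t * t⁻¹ := by rw [h1]
    _ = (t + t) * t⁻¹ := (add_mul t t t⁻¹).symm
    _ = 0 := by rw [h, zero_mul]

lemma two_cancel (h2 : (1 : D) + 1 ≠ 0) {a b : D} (h : a + a = b + b) : a = b := by
  have h' : (a - b) + (a - b) = 0 := by
    rw [sub_add_sub_comm, h, sub_self]
  exact sub_eq_zero.mp (two_imp h2 h')

lemma asc_pair_left (h2 : (1 : D) + 1 ≠ 0) {a b : D} (h1 : a * b = 1) (h1' : b * a = 1)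
    (y : D) : a * asc a b y = 0 := by
  have eL : asc a b (a * y) = -(a * asc a b y) := by
    have t := teich a b a y
    rw [h1, h1', asc_one1, asc_one2, flex, zero_mul, add_zero, sub_zero, zero_add,
      asc_swap12 a b y, mul_neg] at t
    exact t
  have h2L : asc (a * a) b y = a * asc a b y := by
    have t := teich a a b y
    simp only [h1, asc_one2, altL, zero_mul, add_zero, sub_zero, zero_add] at t
    exact t
  have h3L : a * asc a b y + a * asc a b y = 0 := by
    have t := teich b a a y
    simp only [h1', asc_one1, altL, flex, mul_zero, zero_mul, add_zero, zero_add,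
      zero_sub] at t
    -- t : -asc b (a*a) y + asc b a (a*y) = 0
    rw [asc_swap12 (a*a) b y, h2L, asc_swap12 a b (a*y), eL, neg_neg, altR,
      zero_mul] at t
    exact t
  exact two_imp h2 h3L

lemma asc_pair_right (h2 : (1 : D) + 1 ≠ 0) {a b : D} (h1 : a * b = 1) (h1' : b * a = 1)
    (y : D) : asc a b y * a = 0 := by
  have hdag : asc (y * a) b a = asc a b y * a := by
    have t := teich y a b a
    simp only [h1, h1', asc_one2, asc_one3, flex, mul_zero, zero_add, sub_zero,
      add_zero] at t
    rw [asc_cyc y a b] at t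
    exact t
  have hddag : asc y (a * a) b = asc a b y * a := by
    have t := teich y b a a
    simp only [h1', asc_one2, altR, mul_zero, zero_mul, add_zero, zero_add,
      zero_sub, sub_zero] at t
    -- t : asc y b (a*a) = asc y b a * a
    rw [asc_swap23 y (a*a) b, asc_swap23 y a b, asc_cyc y a b, neg_mul] at t
    exact neg_injective t
  have h8 : asc (y * a) a b = asc a b y * a := by
    have t := teich y a a b
    simp only [h1, asc_one3, altL, altR, mul_zero, zero_mul, add_zero, sub_zero,
      zero_add] at t
    -- t : asc (y*a) a b - asc y (a*a) b = 0  (or rearranged)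
    rw [hddag] at t
    exact sub_eq_zero.mp t
  have h9 : asc (y * a) a b = -(asc a b y * a) := by
    rw [asc_swap23 (y*a) b a, hdag]
  have h11 : asc a b y * a = -(asc a b y * a) := h8.symm.trans h9
  exact two_imp h2 (eq_neg_iff_add_eq_zero.mp h11)


lemma asc_pair (h2 : (1 : D) + 1 ≠ 0) {a b : D} (h1 : a * b = 1) (h1' : b * a = 1)
    (y : D) : asc a b y = 0 := by
  have hka : asc a b y * a = 0 := asc_pair_right h2 h1 h1' y
  have hbk : b * asc a b y = 0 := by
    have h := asc_pair_left h2 h1' h1 y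
    rw [asc_swap12 a b y, mul_neg, neg_eq_zero] at h
    exact h
  have h5 : asc (asc a b y) a b = -asc a b y := by
    rw [asc, hka, h1, zero_mul, mul_one, zero_sub]
  have h6 : asc b (asc a b y) a = 0 := by
    rw [asc, hbk, hka, zero_mul, mul_zero, sub_zero]
  have h7 : asc (asc a b y) a b = asc b (asc a b y) a := by
    rw [asc_cyc (asc a b y) a b, asc_cyc a b (asc a b y)]
  rw [h7, h6] at h5
  exact (neg_eq_zero.mp h5.symm)

lemma linv (h2 : (1 : D) + 1 ≠ 0) {x : D} (hx : x ≠ 0) (t : D) : x⁻¹ * (x * t) = t := by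
  have h := asc_pair h2 (AlternativeDivisionRing.inv_mul_cancel x hx)
    (AlternativeDivisionRing.mul_inv_cancel x hx) t
  rw [asc, AlternativeDivisionRing.inv_mul_cancel x hx, one_mul, sub_eq_zero] at h
  exact h.symm

lemma linv' (h2 : (1 : D) + 1 ≠ 0) {x : D} (hx : x ≠ 0) (t : D) : x * (x⁻¹ * t) = t := by
  have h := asc_pair h2 (AlternativeDivisionRing.mul_inv_cancel x hx)
    (AlternativeDivisionRing.inv_mul_cancel x hx) t
  rw [asc, AlternativeDivisionRing.mul_inv_cancel x hx, one_mul, sub_eq_zero] at h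
  exact h.symm

lemma rinv (h2 : (1 : D) + 1 ≠ 0) {x : D} (hx : x ≠ 0) (t : D) : (t * x) * x⁻¹ = t := by
  have h : asc t x x⁻¹ = 0 := by
    rw [asc_cyc t x x⁻¹]
    exact asc_pair h2 (AlternativeDivisionRing.mul_inv_cancel x hx)
      (AlternativeDivisionRing.inv_mul_cancel x hx) t
  rw [asc, AlternativeDivisionRing.mul_inv_cancel x hx, mul_one, sub_eq_zero] at h
  exact h

lemma rinv' (h2 : (1 : D) + 1 ≠ 0) {x : D} (hx : x ≠ 0) (t : D) : (t * x⁻¹) * x = t := by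
  have h : asc t x⁻¹ x = 0 := by
    rw [asc_cyc t x⁻¹ x]
    exact asc_pair h2 (AlternativeDivisionRing.inv_mul_cancel x hx)
      (AlternativeDivisionRing.mul_inv_cancel x hx) t
  rw [asc, AlternativeDivisionRing.inv_mul_cancel x hx, mul_one, sub_eq_zero] at h
  exact h

lemma eq_zero_of_mul (h2 : (1 : D) + 1 ≠ 0) {a b : D} (ha : a ≠ 0) (h : a * b = 0) :
    b = 0 := by
  have h' := linv h2 ha b
  rw [h, mul_zero] at h'
  exact h'.symm

lemma mul_ne (h2 : (1 : D) + 1 ≠ 0) {a b : D} (ha : a ≠ 0) (hb : b ≠ 0) : a * b ≠ 0 :=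
  fun h => hb (eq_zero_of_mul h2 ha h)

lemma mul_cancel0 (h2 : (1 : D) + 1 ≠ 0) {x a b : D} (hx : x ≠ 0) (h : x * a = x * b) :
    a = b := by
  have h' := congrArg (fun t => x⁻¹ * t) h
  simpa only [linv h2 hx] using h'

lemma inv_ne (h2 : (1 : D) + 1 ≠ 0) {x : D} (hx : x ≠ 0) : x⁻¹ ≠ 0 := by
  intro h
  have h' := AlternativeDivisionRing.inv_mul_cancel x hx
  rw [h, zero_mul] at h'
  exact AlternativeDivisionRing.one_ne_zero h'.symm

lemma inv_inv0 (h2 : (1 : D) + 1 ≠ 0) {x : D} (hx : x ≠ 0) : x⁻¹⁻¹ = x := by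
  have ha := AlternativeDivisionRing.mul_inv_cancel x⁻¹ (inv_ne h2 hx)
  have hb := AlternativeDivisionRing.inv_mul_cancel x hx
  exact mul_cancel0 h2 (inv_ne h2 hx) (ha.trans hb.symm)

lemma one_inv : (1 : D)⁻¹ = 1 := by
  have h := AlternativeDivisionRing.inv_mul_cancel (1 : D)
    AlternativeDivisionRing.one_ne_zero
  rwa [mul_one] at h

lemma sqL (a t : D) : (a * a) * t = a * (a * t) :=
  AlternativeDivisionRing.alt_left a t

lemma sqR (a t : D) : (t * a) * a = t * (a * a) :=
  AlternativeDivisionRing.alt_right a t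

lemma opAdd (a b t : D) : (a * b + b * a) * t = a * (b * t) + b * (a * t) := by
  have h : asc a b t + asc b a t = 0 := by rw [asc_swap12 a b t]; abel
  have h' : (a * b + b * a) * t - (a * (b * t) + b * (a * t)) =
      asc a b t + asc b a t := by
    simp only [asc, add_mul]; abel
  rw [h, sub_eq_zero] at h'
  exact h'

lemma L6 (h2 : (1 : D) + 1 ≠ 0) (x y : D) : asc (x * x) x y = 0 := by
  have t := teich x x x y
  simp only [altL, mul_zero, zero_mul, add_zero, zero_add] at t
  rw [asc_swap12 (x * x) x y, sub_neg_eq_add] at t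
  exact two_imp h2 t

lemma sqMid (x y : D) : asc (x * x) y x = 0 := by
  have t := teich x x y x
  simp only [altL, flex, mul_zero, zero_mul, add_zero, zero_add, sub_zero] at t
  exact t

lemma L7 (x y : D) : asc x (x * y) y = 0 := by
  have t := teich x x y y
  simp only [altL, altR, mul_zero, zero_mul, add_zero, zero_add, zero_sub,
    neg_eq_zero] at t
  exact t

lemma moufang (x y z : D) : ((x * y) * x) * z = x * (y * (x * z)) := by
  have lin : asc x (x * y) z + asc x (x * z) y = 0 := by
    have h : asc x (x * (y + z)) (y + z) = 0 := L7 x (y + z)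
    rw [mul_add, asc_add2, asc_add3, asc_add3, L7, L7, zero_add, add_zero] at h
    exact h
  have key : asc (x * y) x z + asc x y (x * z) = 0 := by
    have e1 : asc (x * y) x z = -asc x y (x * z) := by
      rw [asc_cyc (x * y) x z, asc_swap23 x (x * y) z,
        eq_neg_of_add_eq_zero_left lin, asc_swap23 x y (x * z), neg_neg]
    rw [e1]; abel
  have h' : ((x * y) * x) * z - x * (y * (x * z)) =
      asc (x * y) x z + asc x y (x * z) := by
    simp only [asc]; abel
  rw [key, sub_eq_zero] at h'
  exact h'


def Additive1 (F : D → D) : Prop := ∀ a b : D, F (a + b) = F a + F b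

lemma add0 {F : D → D} (hFa : Additive1 F) : F 0 = 0 := by
  have := hFa 0 0
  rw [add_zero] at this
  exact left_eq_add.mp this

lemma addneg {F : D → D} (hFa : Additive1 F) (a : D) : F (-a) = -F a := by
  have := hFa a (-a)
  rw [add_neg_cancel, add0 hFa] at this
  exact (eq_neg_of_add_eq_zero_right this.symm)

lemma addsub {F : D → D} (hFa : Additive1 F) (a b : D) : F (a - b) = F a - F b := by
  rw [sub_eq_add_neg, hFa, addneg hFa, sub_eq_add_neg]

section FG

variable {F G : D → D}

lemma E4 (h2 : (1 : D) + 1 ≠ 0) (hFa : Additive1 F) (hGa : Additive1 G)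
    (hFG : ∀ x : D, x ≠ 0 → F x + (x * x) * G x⁻¹ = 0) (x : D) :
    F (x * x) + (x * x) * F 1 = x * F x + x * F x := by
  by_cases hx : x = 0
  · simp [hx, add0 hFa]
  by_cases hw0 : x + 1 = 0
  · have hx1 : x = -1 := by
      have := eq_neg_of_add_eq_zero_left hw0
      exact this
    subst hx1
    have hne : (-1 : D) * -1 = 1 := by rw [neg_mul_neg, one_mul]
    rw [hne, one_mul]
    simp only [addneg hFa, neg_one_mul, neg_neg]
  -- main case
  set w : D := x + 1 with hw
  set s : D := x * x + x with hs
  have hsw : x * w = s := by rw [hw, mul_add, mul_one]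
  have hs0 : s ≠ 0 := by rw [← hsw]; exact mul_ne h2 hx hw0
  have hax : ∀ t : D, (x * w) * t = x * (w * t) := by
    intro t
    have h : asc x w t = 0 := by rw [hw, asc_add2, altL, asc_one2, add_zero]
    rw [asc, sub_eq_zero] at h
    exact h
  have hwx : ∀ t : D, (w * x) * t = w * (x * t) := by
    intro t
    have h : asc w x t = 0 := by rw [hw, asc_add1, altL, asc_one1, add_zero]
    rw [asc, sub_eq_zero] at h
    exact h
  have hcomm : x * w = w * x := by rw [hw, mul_add, add_mul, mul_one, one_mul]
  have hswap : ∀ t : D, w * (x * t) = x * (w * t) := by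
    intro t
    rw [← hwx t, ← hcomm, hax t]
  have hws : w * s⁻¹ = x⁻¹ := by
    have h1 : x * (w * s⁻¹) = 1 := by
      rw [← hax, hsw, AlternativeDivisionRing.mul_inv_cancel s hs0]
    have h3 := linv h2 hx (w * s⁻¹)
    rw [h1, mul_one] at h3
    exact h3.symm
  have hwinv : w⁻¹ = x⁻¹ - s⁻¹ := by
    have hmul : w * (x⁻¹ - s⁻¹) = 1 := by
      rw [mul_sub, hws, hw, add_mul, AlternativeDivisionRing.mul_inv_cancel x hx,
        one_mul, add_sub_cancel_right]
    have h3 := linv h2 hw0 (x⁻¹ - s⁻¹)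
    rw [hmul, mul_one] at h3
    exact h3
  have hww2 : ∀ t : D, (w * w) * t = (x * x) * t + x * t + x * t + t := by
    intro t
    have : w * w = x * x + x + x + 1 := by
      rw [hw, mul_add, add_mul, mul_one, one_mul]; abel
    rw [this, add_mul, add_mul, add_mul, one_mul]
  have hP1 : ∀ m : D, (x * x) * (x * m) = x * ((x * x) * m) := by
    intro m
    have e1 : asc (x * x) x m = 0 := L6 h2 x m
    have e2 : asc x (x * x) m = 0 := by
      rw [asc_swap12 (x * x) x m, e1, neg_zero]
    rw [asc, sub_eq_zero] at e1 e2
    have e3 : (x * x) * x = x * (x * x) := by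
      have := altL x x
      rw [asc, sub_eq_zero] at this
      exact this
    rw [← e1, e3, e2]
  have m1 : ∀ m : D, x * (x * ((w * w) * m)) = w * (w * ((x * x) * m)) := by
    intro m
    have eA : x * (x * ((x * x) * m)) = (x * x) * ((x * x) * m) := (sqL x _).symm
    have eB : x * (x * (x * m)) = x * ((x * x) * m) :=
      congrArg (fun t => x * t) (sqL x m).symm
    have eC : x * (x * m) = (x * x) * m := (sqL x m).symm
    rw [hww2 m, ← sqL w ((x * x) * m), hww2 ((x * x) * m)]
    simp only [mul_add]
    rw [eA, eB, eC]
  have m2 : ∀ m : D, x * (x * ((w * w) * m)) = (s * s) * m := by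
    intro m
    have e0 : (s * s) * m = x * (w * (x * (w * m))) := by
      rw [sqL s m, ← hsw, hax ((x * w) * m), hax m]
    rw [e0, hswap (w * m), ← sqL w m]
  have hu : (x * x) * G x⁻¹ = -F x := eq_neg_of_add_eq_zero_right (hFG x hx)
  have hv : (s * s) * G s⁻¹ = -(F (x * x) + F x) := by
    have h := eq_neg_of_add_eq_zero_right (hFG s hs0)
    rw [hs, hFa] at h
    exact h
  have hww' : (w * w) * G w⁻¹ = -(F x + F 1) := by
    have h := eq_neg_of_add_eq_zero_right (hFG w hw0)
    rw [hw, hFa] at h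
    exact h
  have hEw : (w * w) * G x⁻¹ - (w * w) * G s⁻¹ = -(F x + F 1) := by
    rw [← mul_sub, ← addsub hGa, ← hwinv]
    exact hww'
  have hbig : -((x * x) * F x + x * F x + x * F x + F x) + (F (x * x) + F x) =
      -((x * x) * F x + (x * x) * F 1) := by
    have step := congrArg (fun t => x * (x * t)) hEw
    simp only [mul_sub, mul_neg, mul_add] at step
    rw [m1 (G x⁻¹), m2 (G s⁻¹), hu, hv] at step
    -- step : w * (w * -F x) - -(F (x*x) + F x) = -(x * (x * F x)) - x * (x * F 1)
    rw [mul_neg, mul_neg, sub_neg_eq_add, ← sqL w (F x), hww2 (F x),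
      ← sqL x (F x), ← sqL x (F 1)] at step
    exact step
  have hdiff : (F (x * x) + (x * x) * F 1) - (x * F x + x * F x) =
      (-((x * x) * F x + x * F x + x * F x + F x) + (F (x * x) + F x)) -
        (-((x * x) * F x + (x * x) * F 1)) := by abel
  rw [hbig, sub_self] at hdiff
  exact sub_eq_zero.mp hdiff

end FG


section FG2

variable {F G : D → D}

lemma E5 (h2 : (1 : D) + 1 ≠ 0) (hFa : Additive1 F) (hGa : Additive1 G)
    (hFG : ∀ x : D, x ≠ 0 → F x + (x * x) * G x⁻¹ = 0) (x y : D) :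
    F (x * y + y * x) + (x * y + y * x) * F 1 =
      (x * F y + x * F y) + (y * F x + y * F x) := by
  have h := E4 h2 hFa hGa hFG (x + y)
  have hxy : (x + y) * (x + y) = x * x + (x * y + y * x) + y * y := by
    simp only [add_mul, mul_add]; abel
  have eL1 : F ((x + y) * (x + y)) = F (x * x) + F (x * y + y * x) + F (y * y) := by
    rw [hxy, hFa, hFa]
  have eL2 : ((x + y) * (x + y)) * F 1 =
      (x * x) * F 1 + (x * y + y * x) * F 1 + (y * y) * F 1 := by
    rw [hxy, add_mul, add_mul]
  have eR : (x + y) * F (x + y) = (x * F x + y * F x) + (x * F y + y * F y) := by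
    rw [hFa, mul_add, add_mul, add_mul]
  rw [eL1, eL2, eR] at h
  have e4x := E4 h2 hFa hGa hFG x
  have e4y := E4 h2 hFa hGa hFG y
  have hdiff : (F (x * y + y * x) + (x * y + y * x) * F 1) -
      ((x * F y + x * F y) + (y * F x + y * F x)) =
      ((F (x * x) + F (x * y + y * x) + F (y * y) +
          ((x * x) * F 1 + (x * y + y * x) * F 1 + (y * y) * F 1)) -
        (((x * F x + y * F x) + (x * F y + y * F y)) +
          ((x * F x + y * F x) + (x * F y + y * F y)))) -
      ((F (x * x) + (x * x) * F 1 - (x * F x + x * F x)) +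
        (F (y * y) + (y * y) * F 1 - (y * F y + y * F y))) := by abel
  rw [e4x, e4y, h] at hdiff
  simp only [sub_self, add_zero, sub_zero] at hdiff
  exact sub_eq_zero.mp hdiff

lemma E6 (h2 : (1 : D) + 1 ≠ 0) (hFa : Additive1 F) (hGa : Additive1 G)
    (hFG : ∀ x : D, x ≠ 0 → F x + (x * x) * G x⁻¹ = 0) {x : D} (hx : x ≠ 0) :
    x * F x⁻¹ + x⁻¹ * F x = F 1 + F 1 := by
  have h := E5 h2 hFa hGa hFG x x⁻¹
  rw [AlternativeDivisionRing.mul_inv_cancel x hx,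
    AlternativeDivisionRing.inv_mul_cancel x hx, hFa, add_mul, one_mul] at h
  -- h : (F 1 + F 1) + (F 1 + F 1) = (x * F x⁻¹ + x * F x⁻¹) + (x⁻¹ * F x + x⁻¹ * F x)
  have h' : (x * F x⁻¹ + x⁻¹ * F x) + (x * F x⁻¹ + x⁻¹ * F x) =
      (F 1 + F 1) + (F 1 + F 1) := by
    rw [h]; abel
  exact two_cancel h2 h'

end FG2


section Delta

variable {dl : D → D}

lemma dpair (h2 : (1 : D) + 1 ≠ 0) (hda : Additive1 dl)
    (hds : ∀ x : D, dl (x * x) = x * dl x + x * dl x) (a b : D) :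
    dl (a * b + b * a) = (a * dl b + a * dl b) + (b * dl a + b * dl a) := by
  have h1 : (a + b) * (a + b) = a * a + (a * b + b * a) + b * b := by
    simp only [add_mul, mul_add]; abel
  have h := hds (a + b)
  rw [h1, hda, hda, hda a b] at h
  -- h : dl (a*a) + dl (a*b+b*a) + dl (b*b) = (a+b)*(dl a + dl b) + (a+b)*(dl a + dl b)
  have hdiff : dl (a * b + b * a) - ((a * dl b + a * dl b) + (b * dl a + b * dl a)) =
      ((dl (a * a) + dl (a * b + b * a) + dl (b * b)) -
        ((a + b) * (dl a + dl b) + (a + b) * (dl a + dl b))) -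
      (dl (a * a) - (a * dl a + a * dl a)) - (dl (b * b) - (b * dl b + b * dl b)) := by
    simp only [mul_add, add_mul]; abel
  rw [h, hds a, hds b] at hdiff
  simp only [sub_self, sub_zero] at hdiff
  exact sub_eq_zero.mp hdiff

lemma P1 (h2 : (1 : D) + 1 ≠ 0) (x m : D) : (x * x) * (x * m) = x * ((x * x) * m) := by
  have e1 : asc (x * x) x m = 0 := L6 h2 x m
  have e2 : asc x (x * x) m = 0 := by
    rw [asc_swap12 (x * x) x m, e1, neg_zero]
  rw [asc, sub_eq_zero] at e1 e2
  have e3 : (x * x) * x = x * (x * x) := by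
    have h := altL x x
    rw [asc, sub_eq_zero] at h
    exact h
  rw [← e1, e3, e2]

lemma P3' (x t : D) : (x * x) * (t * x) = ((x * x) * t) * x := by
  have h := sqMid x t
  rw [asc, sub_eq_zero] at h
  exact h.symm

lemma P4' (x t : D) : (t * x) * (x * x) = (t * (x * x)) * x := by
  have h1 : ((t * x) * x) * x = (t * x) * (x * x) := sqR x (t * x)
  rw [← h1, sqR x t]

lemma P5' (x t : D) : (x * t) * (x * x) = x * (t * (x * x)) := by
  have h : asc x t (x * x) = 0 := by
    rw [asc_swap13 (x * x) t x, sqMid, neg_zero]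
  rw [asc, sub_eq_zero] at h
  exact h

lemma JI (h2 : (1 : D) + 1 ≠ 0) (x y : D) :
    (x * x) * (y * x + x * y) + (y * x + x * y) * (x * x) =
      ((x * x) * y + y * (x * x)) * x + x * ((x * x) * y + y * (x * x)) := by
  rw [mul_add, add_mul, add_mul, mul_add, P3' x y, P1 h2 x y, P4' x y, P5' x y]
  abel

def Eng (x y : D) : D := (x * x) * y + y * (x * x) - ((x * y) * x + (x * y) * x)

lemma Eng_add2 (x a b : D) : Eng x (a + b) = Eng x a + Eng x b := by
  simp only [Eng, mul_add, add_mul]; abel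

lemma R1 (h2 : (1 : D) + 1 ≠ 0) (hda : Additive1 dl)
    (hds : ∀ x : D, dl (x * x) = x * dl x + x * dl x) (x y : D) :
    Eng x y * dl x = 0 := by
  set c := dl x with hc
  set d := dl y with hd
  have eLHS : dl ((x * x) * (y * x + x * y) + (y * x + x * y) * (x * x)) =
      (((x * x) * (y * c) + (x * x) * (y * c) + (x * x) * (y * c) + (x * x) * (y * c)) +
       (x * ((x * x) * d) + x * ((x * x) * d) + x * ((x * x) * d) + x * ((x * x) * d))) +
      ((y * (x * (x * c)) + y * (x * (x * c)) + y * (x * (x * c)) + y * (x * (x * c))) +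
       (x * (y * (x * c)) + x * (y * (x * c)) + x * (y * (x * c)) + x * (y * (x * c)))) := by
    rw [dpair h2 hda hds (x * x) (y * x + x * y), dpair h2 hda hds y x, hds x]
    simp only [mul_add]
    simp only [opAdd]
    simp only [P1 h2 x (dl y), hc, hd]
    abel
  have eRHS : dl (((x * x) * y + y * (x * x)) * x + x * ((x * x) * y + y * (x * x))) =
      ((((x * x) * y) * c + ((x * x) * y) * c) + ((y * (x * x)) * c + (y * (x * x)) * c)) +
      ((x * ((x * x) * d) + x * ((x * x) * d) + x * ((x * x) * d) + x * ((x * x) * d)) +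
       (x * (y * (x * c)) + x * (y * (x * c)) + x * (y * (x * c)) + x * (y * (x * c)) +
        x * (y * (x * c)) + x * (y * (x * c)) + x * (y * (x * c)) + x * (y * (x * c)))) := by
    rw [dpair h2 hda hds ((x * x) * y + y * (x * x)) x, dpair h2 hda hds (x * x) y, hds x]
    simp only [add_mul, mul_add]
    abel
  have K2 := eLHS.symm.trans ((congrArg dl (JI h2 x y)).trans eRHS)
  have K1 : ((x * x) * y) * c + (y * (x * x)) * c = (x * x) * (y * c) + y * (x * (x * c)) := by
    have h := opAdd (x * x) y c
    rw [add_mul, sqL x c] at h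
    exact h
  have hEng : Eng x y * c = (((x * x) * y) * c + (y * (x * x)) * c) -
      (x * (y * (x * c)) + x * (y * (x * c))) := by
    show ((x * x) * y + y * (x * x) - ((x * y) * x + (x * y) * x)) * c = _
    rw [sub_mul, add_mul, add_mul]
    simp only [moufang]
  have hfin : Eng x y * c + Eng x y * c =
      ((((x * x) * (y * c) + (x * x) * (y * c) + (x * x) * (y * c) + (x * x) * (y * c)) +
       (x * ((x * x) * d) + x * ((x * x) * d) + x * ((x * x) * d) + x * ((x * x) * d))) +
      ((y * (x * (x * c)) + y * (x * (x * c)) + y * (x * (x * c)) + y * (x * (x * c))) +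
       (x * (y * (x * c)) + x * (y * (x * c)) + x * (y * (x * c)) + x * (y * (x * c)))) -
      (((((x * x) * y) * c + ((x * x) * y) * c) + ((y * (x * x)) * c + (y * (x * x)) * c)) +
      ((x * ((x * x) * d) + x * ((x * x) * d) + x * ((x * x) * d) + x * ((x * x) * d)) +
       (x * (y * (x * c)) + x * (y * (x * c)) + x * (y * (x * c)) + x * (y * (x * c)) +
        x * (y * (x * c)) + x * (y * (x * c)) + x * (y * (x * c)) + x * (y * (x * c)))))) +
      (((((x * x) * y) * c + (y * (x * x)) * c) - ((x * x) * (y * c) + y * (x * (x * c)))) +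
       ((((x * x) * y) * c + (y * (x * x)) * c) - ((x * x) * (y * c) + y * (x * (x * c)))) +
       ((((x * x) * y) * c + (y * (x * x)) * c) - ((x * x) * (y * c) + y * (x * (x * c)))) +
       ((((x * x) * y) * c + (y * (x * x)) * c) - ((x * x) * (y * c) + y * (x * (x * c))))) := by
    rw [hEng]; abel
  rw [K2, K1] at hfin
  simp only [sub_self, add_zero, zero_add] at hfin
  exact two_imp h2 hfin

end Delta


section Delta2

variable {dl : D → D}

lemma eq_zero_of_mul' (h2 : (1 : D) + 1 ≠ 0) {a b : D} (hb : b ≠ 0) (h : a * b = 0) :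
    a = 0 := by
  have h' := rinv h2 hb a
  rw [h, zero_mul] at h'
  exact h'.symm

lemma flex' (a b : D) : (a * b) * a = a * (b * a) := by
  have h := flex a b
  rw [asc, sub_eq_zero] at h
  exact h

lemma Eng_poldiag (x y : D) : Eng (x + y) y = Eng x y - Eng y x := by
  have f1 : (x * y) * y = x * (y * y) := sqR y x
  have f2 : y * (x * y) = (y * x) * y := (flex' y x).symm
  have f3 : y * (y * x) = (y * y) * x := (sqL y x).symm
  have f4 : (y * y) * y = y * (y * y) := sqL y y
  simp only [Eng, add_mul, mul_add]
  rw [f1, f2, f3, f4]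
  abel

lemma R2 (h2 : (1 : D) + 1 ≠ 0) (hda : Additive1 dl)
    (hds : ∀ x : D, dl (x * x) = x * dl x + x * dl x) (x y : D) :
    Eng x y * dl y = Eng y x * dl x := by
  have h := R1 h2 hda hds (x + y) y
  rw [Eng_poldiag, hda, sub_mul, mul_add, mul_add, R1 h2 hda hds x y,
    R1 h2 hda hds y x, zero_add, add_zero] at h
  exact sub_eq_zero.mp h

lemma antiEngel (h2 : (1 : D) + 1 ≠ 0) (hall : ∀ y x : D, Eng y x = 0) (a b : D) :
    a * b = b * a := by
  by_contra hne
  have hu : a * b - b * a ≠ 0 := sub_ne_zero_of_ne hne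
  have commAd : ∀ y x : D, y * (y * x - x * y) = (y * x - x * y) * y := by
    intro y x
    have h := hall y x
    have hexp : y * (y * x - x * y) - (y * x - x * y) * y = Eng y x := by
      show _ = (y * y) * x + x * (y * y) - ((y * x) * y + (y * x) * y)
      rw [mul_sub, sub_mul, ← sqL y x, (flex' y x).symm, ← sqR y x]
      abel
    rw [h] at hexp
    exact sub_eq_zero.mp hexp
  set u : D := a * b - b * a with hudef
  have c1 : a * u = u * a := commAd a b
  have z1 : asc a (a * b) b = 0 := L7 a b
  have z2 : asc a (b * a) b = 0 := by
    rw [asc_swap13 b (b * a) a, L7 b a, neg_zero]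
  have zau : asc a u b = 0 := by
    rw [hudef, asc_sub2, z1, z2, sub_zero]
  have zu1 : asc u a b = 0 := by
    rw [hudef, asc_sub1, asc_swap12 a (a*b) b, asc_swap12 a (b*a) b, z1, z2]
    abel
  have zu2 : asc u b a = 0 := by
    rw [asc_swap23 u a b, zu1, neg_zero]
  set w : D := u * b with hwdef
  set p : D := u * u with hpdef
  have hp : p ≠ 0 := mul_ne h2 hu hu
  have cw : a * w - w * a = p := by
    have e1 : a * w = u * (a * b) := by
      have t1 : (a * u) * b = a * (u * b) := by
        have := zau; rw [asc, sub_eq_zero] at this; exact this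
      have t2 : (u * a) * b = u * (a * b) := by
        have := zu1; rw [asc, sub_eq_zero] at this; exact this
      rw [hwdef, ← t1, c1, t2]
    have e2 : w * a = u * (b * a) := by
      have t3 : (u * b) * a = u * (b * a) := by
        have := zu2; rw [asc, sub_eq_zero] at this; exact this
      rw [hwdef, t3]
    rw [e1, e2, ← mul_sub, hpdef, hudef]
  have g2 : a * w = p + w * a := by
    rw [← cw]; abel
  have cp : a * p = p * a := by
    have s1 : (a * u) * u = a * (u * u) := by
      have := altR a u; rw [asc, sub_eq_zero] at this; exact this
    have s2 : (u * a) * u = u * (a * u) := flex' u a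
    calc a * p = (a * u) * u := by rw [hpdef, s1]
      _ = (u * a) * u := by rw [c1]
      _ = u * (a * u) := s2
      _ = u * (u * a) := by rw [c1]
      _ = p * a := by rw [hpdef, sqL u a]
  have cww : a * (w * w) - (w * w) * a = p * w + w * p := by
    have g1 : (a * w) * w = a * (w * w) := by
      have := altR a w; rw [asc, sub_eq_zero] at this; exact this
    have g3 : (w * a) * w = w * (a * w) := flex' w a
    have g4 : w * (w * a) = (w * w) * a := (sqL w a).symm
    calc a * (w * w) - (w * w) * a = (a * w) * w - (w * w) * a := by rw [g1]
      _ = (p + w * a) * w - (w * w) * a := by rw [g2]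
      _ = p * w + (w * a) * w - (w * w) * a := by rw [add_mul]
      _ = p * w + w * (a * w) - (w * w) * a := by rw [g3]
      _ = p * w + w * (p + w * a) - (w * w) * a := by rw [g2]
      _ = p * w + (w * p + w * (w * a)) - (w * w) * a := by rw [mul_add]
      _ = p * w + (w * p + (w * w) * a) - (w * w) * a := by rw [g4]
      _ = p * w + w * p := by abel
  have cAd : a * (p * w + w * p) = (p * w + w * p) * a := by
    have h := commAd a (w * w)
    rw [cww] at h
    exact h
  -- expand cAd into atoms and associators
  have q1 : a * (p * w) = (p * (w * a) + p * p) + (asc p a w - asc a p w) := by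
    have t1 : a * (p * w) = (a * p) * w - asc a p w := by rw [asc]; abel
    have t2 : (p * a) * w = p * (a * w) + asc p a w := by rw [asc]; abel
    rw [t1, cp, t2, g2, mul_add]
    abel
  have q2 : a * (w * p) = ((w * a) * p + p * p) - asc a w p := by
    have t1 : a * (w * p) = (a * w) * p - asc a w p := by rw [asc]; abel
    rw [t1, g2, add_mul]
    abel
  have q3 : (p * w) * a = p * (w * a) + asc p w a := by rw [asc]; abel
  have q4 : (w * p) * a = ((w * a) * p - asc w a p) + asc w p a := by
    have t1 : (w * p) * a = w * (p * a) + asc w p a := by rw [asc]; abel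
    have t2 : w * (a * p) = (w * a) * p - asc w a p := by rw [asc]; abel
    rw [t1, ← cp, t2]
  have e_apw : asc a p w = -asc p a w := asc_swap12 p a w
  have e_awp : asc a w p = asc p a w := by
    rw [asc_swap23 a p w, e_apw, neg_neg]
  have e_pwa : asc p w a = -asc p a w := asc_swap23 p a w
  have e_wap : asc w a p = -asc p a w := by
    rw [asc_swap12 a w p, e_awp]
  have e_wpa : asc w p a = asc p a w := by
    rw [asc_swap13 a p w, e_apw, neg_neg]
  have main : p * p + p * p = 0 := by
    have hbig : p * p + p * p =
        (a * (p * w) + a * (w * p)) - ((p * w) * a + (w * p) * a) := by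
      rw [q1, q2, q3, q4, e_apw, e_awp, e_pwa, e_wap, e_wpa]
      abel
    rw [← mul_add a (p*w) (w*p), ← add_mul (p*w) (w*p) a, cAd, sub_self] at hbig
    exact hbig
  exact mul_ne h2 hp hp (two_imp h2 main)

end Delta2


section Final

variable {dl : D → D}

lemma delta_zero (h2 : (1 : D) + 1 ≠ 0) (hda : Additive1 dl)
    (hds : ∀ x : D, dl (x * x) = x * dl x + x * dl x)
    (hnc : ∃ a b : D, a * b ≠ b * a) : ∀ x, dl x = 0 := by
  have key1 : ∀ x : D, (∃ y, Eng y x ≠ 0) → dl x = 0 := by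
    rintro x ⟨y, hy⟩
    have h1 : dl y = 0 := eq_zero_of_mul h2 hy (R1 h2 hda hds y x)
    have h2' := R2 h2 hda hds x y
    rw [h1, mul_zero] at h2'
    exact eq_zero_of_mul h2 hy h2'.symm
  have hex : ∃ y x : D, Eng y x ≠ 0 := by
    by_contra hall
    push_neg at hall
    obtain ⟨a, b, hab⟩ := hnc
    exact hab (antiEngel h2 hall a b)
  obtain ⟨y0, x0, h0⟩ := hex
  have hx0 : dl x0 = 0 := key1 x0 ⟨y0, h0⟩
  intro x
  by_cases hx : ∃ y, Eng y x ≠ 0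
  · exact key1 x hx
  · push_neg at hx
    have hsum : dl (x + x0) = 0 := by
      apply key1
      refine ⟨y0, ?_⟩
      rw [Eng_add2, hx y0, zero_add]
      exact h0
    have h3 := hda x x0
    rw [hsum, hx0, add_zero] at h3
    exact h3.symm

end Final

end ADRAux


open ADRAux in
theorem stmt5 (D : Type*) [AlternativeDivisionRing D]
    (hnc : ∃ a b : D, a * b ≠ b * a)
    (h2 : (1 + 1 : D) ≠ 0)
    (f g : D → D)
    (hf : ∀ x y : D, f (x + y) = f x + f y)
    (hg : ∀ x y : D, g (x + y) = g x + g y)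
    (hid : ∀ x : D, x ≠ 0 → f x + (x * x) * g x⁻¹ = 0) :
    ∃ q : D, (∀ x : D, f x = x * q) ∧ (∀ x : D, g x = -(x * q)) := by
  have hfa : Additive1 f := hf
  have hga : Additive1 g := hg
  have hg1 : g 1 = -f 1 := by
    have h := hid 1 AlternativeDivisionRing.one_ne_zero
    rw [one_inv, one_mul, one_mul] at h
    exact eq_neg_of_add_eq_zero_right h
  have hgsym : ∀ x : D, x ≠ 0 → g x + (x * x) * f x⁻¹ = 0 := by
    intro x hx
    have h := hid x⁻¹ (inv_ne h2 hx)
    rw [inv_inv0 h2 hx] at h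
    have h1 : (x⁻¹ * x⁻¹) * g x = -f x⁻¹ := eq_neg_of_add_eq_zero_right h
    have h3 : x * (x * ((x⁻¹ * x⁻¹) * g x)) = g x := by
      rw [sqL x⁻¹ (g x), linv' h2 hx (x⁻¹ * g x), linv' h2 hx (g x)]
    rw [h1, mul_neg, mul_neg, ← sqL x (f x⁻¹)] at h3
    rw [← h3]
    exact neg_add_cancel _
  have hE7 : ∀ x : D, g x = f x - (x * f 1 + x * f 1) := by
    intro x
    by_cases hx : x = 0
    · rw [hx, add0 hga, add0 hfa, zero_mul]
      abel
    · have h6 := E6 h2 hga hfa hgsym hx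
      have h7 : x * (x * g x⁻¹) + x * (x⁻¹ * g x) = x * g 1 + x * g 1 := by
        rw [← mul_add, h6, mul_add]
      rw [linv' h2 hx (g x), ← sqL x (g x⁻¹)] at h7
      have h8 : (x * x) * g x⁻¹ = -f x := eq_neg_of_add_eq_zero_right (hid x hx)
      rw [h8, hg1, mul_neg] at h7
      calc g x = f x + (-f x + g x) := by abel
        _ = f x + (-(x * f 1) + -(x * f 1)) := by rw [h7]
        _ = f x - (x * f 1 + x * f 1) := by abel
  set dl : D → D := fun x => f x - x * f 1 with hdl
  have hda : Additive1 dl := by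
    intro a b
    show f (a + b) - (a + b) * f 1 = (f a - a * f 1) + (f b - b * f 1)
    rw [hf, add_mul]
    abel
  have hds : ∀ x : D, dl (x * x) = x * dl x + x * dl x := by
    intro x
    show f (x * x) - (x * x) * f 1 = x * (f x - x * f 1) + x * (f x - x * f 1)
    have h4 := E4 h2 hfa hga hid x
    have h5 : f (x * x) = (x * f x + x * f x) - (x * x) * f 1 :=
      eq_sub_of_add_eq h4
    rw [h5, mul_sub, ← sqL x (f 1)]
    abel
  have hz := delta_zero h2 hda hds hnc
  refine ⟨f 1, fun x => ?_, fun x => ?_⟩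
  · have := hz x
    rw [hdl] at this
    simp only at this
    exact sub_eq_zero.mp this
  · have hfx : f x = x * f 1 := by
      have := hz x
      simp only [hdl] at this
      exact sub_eq_zero.mp this
    rw [hE7 x, hfx]
    abel
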